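/- Let k ≥ 1. Suppose s ∈ {±1}, μ ∈ μ₃, τ ∈ μ_{12k+6} and s μ^{-1} τ^{-(4k+4)} = 1 (i.e. the element T(s,μ,τ) fixes the variable x_0 in the Laufer example). Then τ^6 = 1 and s = 1, and either τ^3 = 1 (in which case all of τ^3, μτ^{4k+1}, τ^{6k+3}, sτ^{6k+3} equal 1, so all variables are fixed) or τ^3 = −1 (in which case none of τ^3, μτ^{4k+1}, τ^{6k+3}, sτ^{6k+3} equals 1). -/
import Mathlib


/-- In the Laufer example, if `T(s,μ,τ)` fixes `x₀` (i.e. `s μ⁻¹ τ^{-(4k+4)} = 1`),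
then `τ⁶ = 1` and `s = 1`, and either `τ³ = 1` and all of `τ³, μτ^{4k+1}, τ^{6k+3},
sτ^{6k+3}` equal `1` (all variables fixed) or `τ³ = -1` and none equals `1`. -/
theorem laufer_fix_x0 (k : ℕ) (hk : 1 ≤ k) (s μ τ : ℂˣ)
    (hs : s ^ 2 = 1) (hμ : μ ^ 3 = 1) (hτ : τ ^ (12 * k + 6) = 1)
    (hfix : s * μ⁻¹ * τ ^ (-(4 * (k : ℤ) + 4)) = 1) :
    τ ^ 6 = 1 ∧ s = 1 ∧
    ((τ ^ 3 = 1 ∧ μ * τ ^ (4 * k + 1) = 1 ∧ τ ^ (6 * k + 3) = 1 ∧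
        s * τ ^ (6 * k + 3) = 1) ∨
     (τ ^ 3 = -1 ∧ μ * τ ^ (4 * k + 1) ≠ 1 ∧ τ ^ (6 * k + 3) ≠ 1 ∧
        s * τ ^ (6 * k + 3) ≠ 1)) := by
  -- Step 1: τ^(4k+4) = s * μ⁻¹
  have h1 : τ ^ (4 * k + 4) = s * μ⁻¹ := by
    have h := hfix
    rw [show (-(4 * (k : ℤ) + 4)) = -((4 * k + 4 : ℕ) : ℤ) by push_cast; ring,
      zpow_neg, zpow_natCast] at h
    exact (mul_inv_eq_one.mp h).symm
  -- Step 2: τ^6 = s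
  have h6 : τ ^ 6 = s := by
    have h3 : (τ ^ (4 * k + 4)) ^ 3 = s := by
      rw [h1, mul_pow, inv_pow, hμ, inv_one, mul_one,
        show (3 : ℕ) = 2 + 1 by rfl, pow_add, hs, one_mul, pow_one]
    calc τ ^ 6 = τ ^ (12 * k + 6) * τ ^ 6 := by rw [hτ, one_mul]
      _ = τ ^ ((4 * k + 4) * 3) := by rw [← pow_add]; ring_nf
      _ = (τ ^ (4 * k + 4)) ^ 3 := by rw [pow_mul]
      _ = s := h3
  -- Step 3: s = 1
  have hs1 : s = 1 := by
    have h7 : s ^ (2 * k + 1) = 1 := by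
      rw [← h6, ← pow_mul]
      rw [show 6 * (2 * k + 1) = 12 * k + 6 by ring]
      exact hτ
    have : s ^ (2 * k + 1) = s := by
      rw [pow_add, pow_mul, hs, one_pow, one_mul, pow_one]
    rw [← this, h7]
  have h61 : τ ^ 6 = 1 := by rw [h6, hs1]
  -- auxiliary facts
  have hinv3 : (τ ^ 3)⁻¹ = τ ^ 3 := by
    apply inv_eq_of_mul_eq_one_left
    rw [← pow_add]; exact h61
  have hμτ : μ * τ ^ (4 * k + 1) = τ ^ 3 := by
    have hμ' : μ = (τ ^ (4 * k + 4))⁻¹ := by rw [h1, hs1, one_mul, inv_inv]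
    have hmul : μ * τ ^ (4 * k + 1) * τ ^ 3 = 1 := by
      rw [mul_assoc, ← pow_add, show 4 * k + 1 + 3 = 4 * k + 4 by ring, hμ',
        inv_mul_cancel]
    exact (eq_inv_of_mul_eq_one_left hmul).trans hinv3
  have h63 : τ ^ (6 * k + 3) = (τ ^ 3) ^ (2 * k + 1) := by
    rw [← pow_mul]; ring_nf
  -- case split on τ^3 = ±1
  have hcase : τ ^ 3 = 1 ∨ τ ^ 3 = -1 := by
    have hval : ((τ : ℂ) ^ 3) * ((τ : ℂ) ^ 3) = 1 := by
      have : ((τ ^ 6 : ℂˣ) : ℂ) = 1 := by rw [h61]; rfl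
      rw [← this]; push_cast; ring
    rcases mul_self_eq_one_iff.mp hval with h | h
    · left; ext; push_cast; exact h
    · right; ext; push_cast; exact h
  refine ⟨h61, hs1, ?_⟩
  rcases hcase with h3 | h3
  · left
    refine ⟨h3, by rw [hμτ, h3], by rw [h63, h3, one_pow], ?_⟩
    rw [hs1, one_mul, h63, h3, one_pow]
  · right
    have hodd : Odd (2 * k + 1) := ⟨k, by ring⟩
    have hneg : τ ^ (6 * k + 3) = -1 := by rw [h63, h3, hodd.neg_one_pow]
    have hne : (-1 : ℂˣ) ≠ 1 := by
      intro h
      have : ((-1 : ℂˣ) : ℂ) = 1 := by rw [h]; rfl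
      rw [Units.val_neg, Units.val_one] at this
      norm_num at this
    refine ⟨h3, ?_, ?_, ?_⟩
    · rw [hμτ, h3]; exact hne
    · rw [hneg]; exact hne
    · rw [hs1, one_mul, hneg]; exact hne
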